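/- Let A be a real m×n matrix of rank n with columns α₁ᵀ,…,αₙᵀ, β ∈ ℝ^m, y ∈ ℝⁿ with Ayᵀ = βᵀ, and F : (ℝ_{>0})ⁿ → ℝ satisfying F(v₁c^{α₁},…,vₙc^{αₙ}) = F(v)·c^β for all v ∈ (ℝ_{>0})ⁿ and c ∈ (ℝ_{>0})^m. Then F(v) = C·v^y for all v ∈ (ℝ_{>0})ⁿ, where C := F(1,…,1). -/
import Mathlib


/-- `v^y := ∏ i, v i ^ y i` (real powers). -/
noncomputable def ppow {ι : Type*} [Fintype ι] (v y : ι → ℝ) : ℝ := ∏ i, v i ^ y i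

/-- The scaled vector `(v₁c^{α₁}, …, vₙc^{αₙ})`, where `αⱼᵀ` are the columns of `A`
and `c^α := ∏ i, c i ^ α i`. -/
noncomputable def scale {m n : ℕ} (A : Matrix (Fin m) (Fin n) ℝ) (c : Fin m → ℝ)
    (v : Fin n → ℝ) : Fin n → ℝ := fun j => v j * ppow c (fun i => A i j)

/-- `F ∈ S(A,β,ε)`: `|F(v₁c^{α₁},…,vₙc^{αₙ}) − F(v)c^β| ≤ ε|F(v)|c^β` for all positive
`v ∈ ℝⁿ`, `c ∈ ℝ^m`. `S(A,β) := S(A,β,0)`. -/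
def memS {m n : ℕ} (A : Matrix (Fin m) (Fin n) ℝ) (β : Fin m → ℝ) (ε : ℝ)
    (F : (Fin n → ℝ) → ℝ) : Prop :=
  ∀ v : Fin n → ℝ, (∀ j, 0 < v j) → ∀ c : Fin m → ℝ, (∀ i, 0 < c i) →
    |F (scale A c v) - F v * ppow c β| ≤ ε * |F v| * ppow c β

/-- Classical Buckingham theorem, full column-rank case: if `rank A = n`, `Ayᵀ = βᵀ`
and `F ∈ S(A,β)`, then `F(v) = C·v^y` with `C := F(1,…,1)`. -/
theorem buckingham_full_rank (m n : ℕ) (A : Matrix (Fin m) (Fin n) ℝ)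
    (hrank : A.rank = n) (β : Fin m → ℝ) (y : Fin n → ℝ) (hy : A.mulVec y = β)
    (F : (Fin n → ℝ) → ℝ)
    (hF : ∀ v : Fin n → ℝ, (∀ j, 0 < v j) → ∀ c : Fin m → ℝ, (∀ i, 0 < c i) →
      F (scale A c v) = F v * ppow c β) :
    ∀ v : Fin n → ℝ, (∀ j, 0 < v j) → F v = F (fun _ => 1) * ppow v y := by
  intro v hv
  -- surjectivity of `A.transpose.mulVec`
  have hsurj : Function.Surjective A.transpose.mulVecLin := by
    rw [← LinearMap.range_eq_top]
    apply Submodule.eq_top_of_finrank_eq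
    have : A.transpose.rank = n := by rw [Matrix.rank_transpose]; exact hrank
    simpa [Matrix.rank, Module.finrank_fintype_fun_eq_card] using this
  obtain ⟨u, hu⟩ := hsurj (fun j => Real.log (v j))
  set c : Fin m → ℝ := fun i => Real.exp (u i) with hc
  have hcpos : ∀ i, 0 < c i := fun i => Real.exp_pos _
  have hpow : ∀ w : Fin m → ℝ, ppow c w = Real.exp (∑ i, u i * w i) := by
    intro w
    rw [ppow, Real.exp_sum]
    refine Finset.prod_congr rfl fun i _ => ?_
    rw [hc, Real.rpow_def_of_pos (Real.exp_pos _), Real.log_exp]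
  have hscale : scale A c (fun _ => 1) = v := by
    funext j
    have hj : A.transpose.mulVecLin u j = Real.log (v j) := by rw [hu]
    simp only [Matrix.mulVecLin_apply, Matrix.mulVec, dotProduct,
      Matrix.transpose_apply] at hj
    rw [scale, hpow, one_mul]
    simp only [mul_comm (u _)]
    rw [hj]
    exact Real.exp_log (hv j)
  have key := hF (fun _ => 1) (fun _ => one_pos) c hcpos
  rw [hscale] at key
  rw [key]
  congr 1
  have hβ : ppow c β = Real.exp (∑ i, u i * β i) := hpow β
  have hdot : ∑ i, u i * β i = ∑ j, Real.log (v j) * y j := by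
    rw [← hy]
    have := Matrix.dotProduct_mulVec u A y
    simp only [dotProduct] at this ⊢
    rw [this]
    refine Finset.sum_congr rfl fun j _ => ?_
    have hj : A.transpose.mulVecLin u j = Real.log (v j) := by rw [hu]
    simp only [Matrix.mulVecLin_apply, Matrix.mulVec, dotProduct,
      Matrix.transpose_apply] at hj
    rw [Matrix.vecMul, dotProduct]
    simp only [mul_comm (u _)] at hj ⊢
    rw [hj]
  rw [hβ, hdot, ppow, Real.exp_sum]
  exact Finset.prod_congr rfl fun j _ =>
    (Real.exp_log (hv j) ▸ (Real.rpow_def_of_pos (hv j) (y j)).symm)
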